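/- Fix k ≥ 2 and 1 ≤ m ≤ k−1. Define the DFA A on state set {1,…,k} over alphabet {a,b,c} where a acts as the k-cycle (1 2 … k), b acts as the transposition (1 2), c acts as the identity, with initial state 1 and final set F = {1,…,m}. Then A is a minimal DFA: every state is reachable from 1, and any two distinct states are distinguishable (there is a word sending one into F and the other out of F). -/

import Mathlib

/-- Transition function of the quotient-source automaton: letter 0 acts as the
k-cycle, letter 1 as the transposition (1 2), letter 2 as the identity. -/
def qDelta (k : ℕ) (hk : 2 ≤ k) : Fin k → Fin 3 → Fin k :=
  fun q x =>
    if x = 0 then finRotate k q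
    else if x = 1 then Equiv.swap (⟨0, by omega⟩ : Fin k) ⟨1, by omega⟩ q
    else q

namespace Stmt12Aux

/-- word performing (swap ∘ rotate)^t -/
def wb (t : ℕ) : List (Fin 3) := (List.replicate t ([0, 1] : List (Fin 3))).flatten

lemma foldl_replicate_zero (n : ℕ) (hk : 2 ≤ n + 2) (t : ℕ) (p : Fin (n + 2)) :
    (List.foldl (qDelta (n + 2) hk) p (List.replicate t 0)).val = (p.val + t) % (n + 2) := by
  induction t generalizing p with
  | zero => simp [Nat.mod_eq_of_lt p.isLt]
  | succ t ih =>
      rw [List.replicate_succ, List.foldl_cons, ih]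
      have h1 : qDelta (n + 2) hk p 0 = p + 1 := by
        simp [qDelta, finRotate_succ_apply]
      rw [h1, Fin.add_def, Fin.val_one, Nat.mod_add_mod]
      congr 1
      omega

lemma foldl_pair (n : ℕ) (hk : 2 ≤ n + 2) (p : Fin (n + 2)) :
    List.foldl (qDelta (n + 2) hk) p [0, 1] =
      Equiv.swap (0 : Fin (n + 2)) 1 (p + 1) := by
  simp [qDelta, finRotate_succ_apply]

lemma wb_succ (n : ℕ) (hk : 2 ≤ n + 2) (t : ℕ) (p : Fin (n + 2)) :
    List.foldl (qDelta (n + 2) hk) p (wb (t + 1)) =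
      List.foldl (qDelta (n + 2) hk) (Equiv.swap (0 : Fin (n + 2)) 1 (p + 1)) (wb t) := by
  rw [wb, List.replicate_succ, List.flatten_cons, List.foldl_append, ← wb, foldl_pair]

lemma g_zero (n : ℕ) : Equiv.swap (0 : Fin (n + 2)) 1 ((0 : Fin (n + 2)) + 1) = 0 := by
  simp

lemma foldl_wb_zero (n : ℕ) (hk : 2 ≤ n + 2) (t : ℕ) :
    List.foldl (qDelta (n + 2) hk) (0 : Fin (n + 2)) (wb t) = 0 := by
  induction t with
  | zero => rfl
  | succ t ih => rw [wb_succ, g_zero, ih]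

lemma foldl_wb_top (n : ℕ) (hk : 2 ≤ n + 2) (t : ℕ) :
    ∀ j : Fin (n + 2), 1 ≤ j.val → j.val + t = n + 1 →
      List.foldl (qDelta (n + 2) hk) j (wb t) = ⟨n + 1, by omega⟩ := by
  induction t with
  | zero =>
      intro j hj1 hj2
      have : j = ⟨n + 1, by omega⟩ := Fin.ext (by simp; omega)
      rw [this]; rfl
  | succ t ih =>
      intro j hj1 hj2
      rw [wb_succ]
      have hjlt : j.val + 1 < n + 2 := by omega
      have hadd : (j + 1 : Fin (n + 2)) = ⟨j.val + 1, hjlt⟩ := by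
        apply Fin.ext
        rw [Fin.add_def, Fin.val_one]
        exact Nat.mod_eq_of_lt hjlt
      have hswap : Equiv.swap (0 : Fin (n + 2)) 1 (j + 1) = ⟨j.val + 1, hjlt⟩ := by
        rw [hadd]
        apply Equiv.swap_apply_of_ne_of_ne
        · intro h; have := congrArg Fin.val h; simp at this
        · intro h; have := congrArg Fin.val h; simp only [Fin.val_mk, Fin.val_one] at this; omega
      rw [hswap]
      exact ih ⟨j.val + 1, hjlt⟩ (by simp) (by simp; omega)

end Stmt12Aux

open Stmt12Aux in
/-- The automaton A with final set {1,…,m} is minimal: all states reachable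
from the initial state, and distinct states are distinguishable. -/
theorem stmt_12 (k m : ℕ) (hk : 2 ≤ k) (hm1 : 1 ≤ m) (hm2 : m ≤ k - 1) :
    (∀ q : Fin k, ∃ w : List (Fin 3), w.foldl (qDelta k hk) ⟨0, by omega⟩ = q) ∧
      (∀ p q : Fin k, p ≠ q → ∃ w : List (Fin 3),
        ¬(w.foldl (qDelta k hk) p ∈ {x : Fin k | x.val < m} ↔
          w.foldl (qDelta k hk) q ∈ {x : Fin k | x.val < m})) := by
  obtain ⟨n, rfl⟩ : ∃ n, k = n + 2 := ⟨k - 2, by omega⟩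
  constructor
  · intro q
    refine ⟨List.replicate q.val 0, Fin.ext ?_⟩
    rw [foldl_replicate_zero]
    simp [Nat.mod_eq_of_lt q.isLt]
  · intro p q hpq
    have hne : p.val ≠ q.val := fun h => hpq (Fin.ext h)
    set t1 := n + 2 - p.val with ht1
    have hplt := p.isLt
    have hqlt := q.isLt
    have hp0 : (List.foldl (qDelta (n + 2) hk) p (List.replicate t1 0)).val = 0 := by
      rw [foldl_replicate_zero]
      have h : p.val + t1 = n + 2 := by omega
      rw [h]; simp
    set q' := List.foldl (qDelta (n + 2) hk) q (List.replicate t1 0) with hq'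
    have hq'val : q'.val = (q.val + t1) % (n + 2) := foldl_replicate_zero n hk t1 q
    have hr1 : 1 ≤ q'.val := by
      rcases lt_or_gt_of_ne hne with h | h
      · have heq : q.val + t1 = (n + 2) + (q.val - p.val) := by omega
        rw [hq'val, heq, Nat.add_mod_left, Nat.mod_eq_of_lt (by omega)]
        omega
      · have : q.val + t1 < n + 2 := by omega
        rw [hq'val, Nat.mod_eq_of_lt this]
        omega
    have hr2 : q'.val ≤ n + 1 := by have := q'.isLt; omega
    refine ⟨List.replicate t1 0 ++ wb (n + 1 - q'.val), ?_⟩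
    rw [List.foldl_append, List.foldl_append]
    have hpfix : List.foldl (qDelta (n + 2) hk) p (List.replicate t1 0) = 0 :=
      Fin.ext (by rw [hp0]; rfl)
    rw [hpfix, foldl_wb_zero, ← hq',
      foldl_wb_top n hk (n + 1 - q'.val) q' hr1 (by omega)]
    simp only [Set.mem_setOf_eq, Fin.val_zero, Fin.val_mk]
    intro hiff
    have h2 : n + 1 < m := hiff.mp (by omega)
    omega

open Stmt12Aux
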